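/- Let H be a Hopf algebra with bijective antipode S, and α ∈ Aut_Hopf(H). Then the assignment α ↦ ^{α}H, where ^{α}H is H with left coaction h ↦ α(h_{(1)}) ⊗ h_{(2)} and right regular coaction, defines a group homomorphism from Aut_Hopf(H) to the group of isomorphism classes of (H,H)-bi-Galois objects under cotensor product; in particular there is an isomorphism of (H,H)-bicomodule algebras ^{α}H □^H ^{β}H ≅ ^{αβ}H for all α, β ∈ Aut_Hopf(H). -/
import Mathlib


open TensorProduct Coalgebra LinearMap

section TwistedGaloisAux

variable {k : Type} [CommRing k] {H : Type} [Ring H] [HopfAlgebra k H]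

/-- Auxiliary: the retraction `(lid ∘ (ε ⊗ id))` splits `h ↦ f(h₁) ⊗ h₂`. -/
private lemma twistedGalois_retract (f : H →ₐc[k] H) (x : H) :
    (TensorProduct.lid k H) (LinearMap.rTensor H (counit (R := k) (A := H))
      ((TensorProduct.map f.toLinearMap LinearMap.id ∘ₗ comul (R := k) (A := H)) x)) = x := by
  rw [LinearMap.comp_apply,
    show TensorProduct.map f.toLinearMap LinearMap.id = LinearMap.rTensor H f.toLinearMap from rfl,
    ← LinearMap.rTensor_comp_apply,
    show (counit ∘ₗ f.toLinearMap : H →ₗ[k] k) = counit from CoalgHomClass.counit_comp f,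
    rTensor_counit_comul]
  simp

/-- Auxiliary: right colinearity of `h ↦ b(h₁) ⊗ h₂` for any linear `b`. -/
private lemma twistedGalois_rightColinear (b : H →ₗ[k] H) :
    (TensorProduct.assoc k H H H).symm.toLinearMap ∘ₗ
        (LinearMap.lTensor H (comul (R := k) (A := H))) ∘ₗ
        (LinearMap.rTensor H b ∘ₗ comul (R := k) (A := H))
      = (LinearMap.rTensor H (LinearMap.rTensor H b ∘ₗ comul (R := k) (A := H))) ∘ₗ
        comul (R := k) (A := H) := by
  ext x
  simp only [comp_apply, LinearEquiv.coe_coe, rTensor_comp_apply]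
  have h1 : LinearMap.lTensor H (comul (R := k) (A := H)) (LinearMap.rTensor H b (comul x))
      = LinearMap.rTensor (H ⊗[k] H) b
          (LinearMap.lTensor H (comul (R := k) (A := H)) (comul x)) := by
    rw [← comp_apply, lTensor_comp_rTensor, ← rTensor_comp_lTensor, comp_apply]
  rw [h1, ← coassoc_apply]
  have h2 := TensorProduct.map_map_assoc_symm (R := k) b (LinearMap.id : H →ₗ[k] H)
    (LinearMap.id : H →ₗ[k] H)
    ((TensorProduct.assoc k H H H) (LinearMap.rTensor H (comul (R := k) (A := H)) (comul x)))
  simp only [TensorProduct.map_id, LinearEquiv.symm_apply_apply] at h2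
  rw [show TensorProduct.map b LinearMap.id = LinearMap.rTensor H b from rfl] at h2
  rw [show TensorProduct.map (LinearMap.rTensor H b) LinearMap.id
      = LinearMap.rTensor H (LinearMap.rTensor H b) from rfl] at h2
  exact h2.symm

/-- Auxiliary: left colinearity. -/
private lemma twistedGalois_leftColinear (a b : H →ₗ[k] H)
    (hb : TensorProduct.map b b ∘ₗ comul (R := k) (A := H) = comul ∘ₗ b) :
    (TensorProduct.assoc k H H H).toLinearMap ∘ₗ
        (LinearMap.rTensor H (LinearMap.rTensor H a ∘ₗ comul (R := k) (A := H))) ∘ₗ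
        (LinearMap.rTensor H b ∘ₗ comul (R := k) (A := H))
      = (LinearMap.lTensor H (LinearMap.rTensor H b ∘ₗ comul (R := k) (A := H))) ∘ₗ
        (LinearMap.rTensor H (a ∘ₗ b)) ∘ₗ comul (R := k) (A := H) := by
  ext x
  simp only [comp_apply, LinearEquiv.coe_coe, rTensor_comp_apply]
  have h1 : LinearMap.rTensor H (comul (R := k) (A := H)) (LinearMap.rTensor H b (comul x))
      = LinearMap.rTensor H (TensorProduct.map b b)
          (LinearMap.rTensor H (comul (R := k) (A := H)) (comul x)) := by
    rw [← rTensor_comp_apply, ← hb, rTensor_comp_apply]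
  rw [h1, ← rTensor_comp_apply]
  have h2 : LinearMap.rTensor H a ∘ₗ TensorProduct.map b b
      = TensorProduct.map (a ∘ₗ b) b := by
    rw [show LinearMap.rTensor H a = TensorProduct.map a LinearMap.id from rfl,
      ← TensorProduct.map_comp, LinearMap.id_comp]
  rw [h2]
  have h3 := TensorProduct.map_map_assoc (R := k) (a ∘ₗ b) b (LinearMap.id : H →ₗ[k] H)
    (LinearMap.rTensor H (comul (R := k) (A := H)) (comul x))
  rw [show TensorProduct.map (TensorProduct.map (a ∘ₗ b) b) LinearMap.id
      = LinearMap.rTensor H (TensorProduct.map (a ∘ₗ b) b) from rfl] at h3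
  rw [← h3, coassoc_apply]
  rw [show TensorProduct.map b LinearMap.id = LinearMap.rTensor H b from rfl]
  rw [← comp_apply (TensorProduct.map (a ∘ₗ b) (LinearMap.rTensor H b)), ← lTensor_comp_rTensor]
  have h4 : ∀ y : H ⊗[k] H, LinearMap.rTensor (H ⊗[k] H) (a ∘ₗ b)
      (LinearMap.lTensor H (comul (R := k) (A := H)) y)
      = LinearMap.lTensor H (comul (R := k) (A := H)) (LinearMap.rTensor H (a ∘ₗ b) y) :=
    fun y => by rw [← comp_apply, rTensor_comp_lTensor, ← lTensor_comp_rTensor, comp_apply]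
  simp only [comp_apply, lTensor_comp_apply, ← rTensor_comp_apply, h4]

/-- Auxiliary: the image of `h ↦ b(h₁) ⊗ h₂` satisfies the cotensor relation. -/
private lemma twistedGalois_ker (b : H →ₗ[k] H)
    (hb : TensorProduct.map b b ∘ₗ comul (R := k) (A := H) = comul ∘ₗ b) :
    LinearMap.rTensor H (comul (R := k) (A := H)) ∘ₗ
        (LinearMap.rTensor H b ∘ₗ comul (R := k) (A := H))
      = (TensorProduct.assoc k H H H).symm.toLinearMap ∘ₗ
          LinearMap.lTensor H (LinearMap.rTensor H b ∘ₗ comul (R := k) (A := H)) ∘ₗ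
          (LinearMap.rTensor H b ∘ₗ comul (R := k) (A := H)) := by
  ext x
  simp only [comp_apply, LinearEquiv.coe_coe, lTensor_comp_apply]
  have h1 : LinearMap.rTensor H (comul (R := k) (A := H)) (LinearMap.rTensor H b (comul x))
      = LinearMap.rTensor H (TensorProduct.map b b)
          (LinearMap.rTensor H (comul (R := k) (A := H)) (comul x)) := by
    rw [← rTensor_comp_apply, ← hb, rTensor_comp_apply]
  rw [h1]
  have h2 : LinearMap.lTensor H (comul (R := k) (A := H)) (LinearMap.rTensor H b (comul x))
      = LinearMap.rTensor (H ⊗[k] H) b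
          (LinearMap.lTensor H (comul (R := k) (A := H)) (comul x)) := by
    rw [← comp_apply, lTensor_comp_rTensor, ← rTensor_comp_lTensor, comp_apply]
  rw [h2, ← coassoc_apply]
  rw [← comp_apply (LinearMap.lTensor H (LinearMap.rTensor H b)), lTensor_comp_rTensor]
  have h3 := TensorProduct.map_map_assoc_symm (R := k) b b (LinearMap.id : H →ₗ[k] H)
    ((TensorProduct.assoc k H H H) (LinearMap.rTensor H (comul (R := k) (A := H)) (comul x)))
  simp only [LinearEquiv.symm_apply_apply] at h3
  rw [show TensorProduct.map b LinearMap.id = LinearMap.rTensor H b from rfl] at h3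
  rw [show TensorProduct.map (TensorProduct.map b b) LinearMap.id
      = LinearMap.rTensor H (TensorProduct.map b b) from rfl] at h3
  exact h3

set_option synthInstance.maxHeartbeats 400000 in
/-- Auxiliary: naturality needed for the surjectivity (onto the cotensor) argument. -/
private lemma twistedGalois_counit_nat (g : H →ₗ[k] (H ⊗[k] H)) (x : H ⊗[k] H) :
    LinearMap.rTensor H ((TensorProduct.lid k H).toLinearMap ∘ₗ
        LinearMap.rTensor H (counit (R := k) (A := H)))
      ((TensorProduct.assoc k H H H).symm (LinearMap.lTensor H g x))
    = g (((TensorProduct.lid k H).toLinearMap ∘ₗ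
        LinearMap.rTensor H (counit (R := k) (A := H))) x) := by
  have key : ∀ (a : H) (y : H ⊗[k] H),
      LinearMap.rTensor H ((TensorProduct.lid k H).toLinearMap ∘ₗ
          LinearMap.rTensor H (counit (R := k) (A := H)))
        ((TensorProduct.assoc k H H H).symm (a ⊗ₜ y)) = counit (R := k) a • y := by
    intro a y
    induction y using TensorProduct.induction_on with
    | zero => simp only [tmul_zero, map_zero, smul_zero]
    | tmul u v => simp [TensorProduct.assoc_symm_tmul, smul_tmul']
    | add u v hu hv => simp [tmul_add, hu, hv, smul_add]
  induction x using TensorProduct.induction_on with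
  | zero => simp
  | tmul a b => simp [key a (g b), map_smul]
  | add u v hu hv => simp [hu, hv]

end TwistedGaloisAux

/-- Let `H` be a Hopf algebra with bijective antipode and `α, β` Hopf algebra
automorphisms of `H`.  The assignment `α ↦ ^{α}H` (where `^{α}H` is `H` with left
coaction `h ↦ α(h₁) ⊗ h₂` and the regular right coaction) is multiplicative up to
isomorphism of `(H,H)`-bicomodule algebras: `^{α}H □^H ^{β}H ≅ ^{αβ}H`, hence
defines a group homomorphism from `Aut_Hopf(H)` to the group of isomorphism
classes of `(H,H)`-bi-Galois objects under cotensor product.  Concretely, the map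
`φ : h ↦ β(h₁) ⊗ h₂` is a unital multiplicative `k`-linear injection of `^{αβ}H`
onto the cotensor product `^{α}H □^H ^{β}H ⊆ H ⊗ H` which intertwines the left
and right coactions. -/
theorem twistedGalois_cotensor_iso
    {k : Type} [CommRing k] {H : Type} [Ring H] [HopfAlgebra k H]
    (Sinv : H →ₗ[k] H)
    (hS1 : Sinv ∘ₗ HopfAlgebra.antipode (R := k) (A := H) = LinearMap.id)
    (hS2 : HopfAlgebra.antipode (R := k) (A := H) ∘ₗ Sinv = LinearMap.id)
    (α β : H →ₐc[k] H)
    (hα : Function.Bijective α) (hβ : Function.Bijective β)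
    -- the cotensor product `^{α}H □^H ^{β}H` inside `H ⊗ H`
    (cot : Submodule k (H ⊗[k] H))
    (hcot : cot = LinearMap.ker
      ((LinearMap.rTensor H (comul (R := k) (A := H))) -
        (TensorProduct.assoc k H H H).symm.toLinearMap ∘ₗ
          (LinearMap.lTensor H
            ((TensorProduct.map β.toLinearMap LinearMap.id) ∘ₗ comul (R := k) (A := H))))) :
    -- `φ(h) = β(h₁) ⊗ h₂` is an isomorphism of bicomodule algebras `^{αβ}H ≅ ^{α}H □^H ^{β}H`
    Function.Injective
      ⇑((TensorProduct.map β.toLinearMap LinearMap.id) ∘ₗ comul (R := k) (A := H)) ∧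
    LinearMap.range
      ((TensorProduct.map β.toLinearMap LinearMap.id) ∘ₗ comul (R := k) (A := H)) = cot ∧
    (∀ x y : H,
      ((TensorProduct.map β.toLinearMap LinearMap.id) ∘ₗ comul (R := k) (A := H)) (x * y)
        = ((TensorProduct.map β.toLinearMap LinearMap.id) ∘ₗ comul (R := k) (A := H)) x *
          ((TensorProduct.map β.toLinearMap LinearMap.id) ∘ₗ comul (R := k) (A := H)) y) ∧
    ((TensorProduct.map β.toLinearMap LinearMap.id) ∘ₗ comul (R := k) (A := H)) 1 = 1 ∧
    -- left colinearity
    (TensorProduct.assoc k H H H).toLinearMap ∘ₗ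
        (LinearMap.rTensor H ((TensorProduct.map α.toLinearMap LinearMap.id) ∘ₗ
          comul (R := k) (A := H))) ∘ₗ
        ((TensorProduct.map β.toLinearMap LinearMap.id) ∘ₗ comul (R := k) (A := H))
      = (LinearMap.lTensor H
            ((TensorProduct.map β.toLinearMap LinearMap.id) ∘ₗ comul (R := k) (A := H))) ∘ₗ
        (TensorProduct.map (α.comp β).toLinearMap LinearMap.id) ∘ₗ comul (R := k) (A := H) ∧
    -- right colinearity
    (TensorProduct.assoc k H H H).symm.toLinearMap ∘ₗ
        (LinearMap.lTensor H (comul (R := k) (A := H))) ∘ₗ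
        ((TensorProduct.map β.toLinearMap LinearMap.id) ∘ₗ comul (R := k) (A := H))
      = (LinearMap.rTensor H
            ((TensorProduct.map β.toLinearMap LinearMap.id) ∘ₗ comul (R := k) (A := H))) ∘ₗ
        comul (R := k) (A := H) := by
  have hmap : TensorProduct.map β.toLinearMap LinearMap.id
      = LinearMap.rTensor H β.toLinearMap := rfl
  have hmapα : TensorProduct.map α.toLinearMap LinearMap.id
      = LinearMap.rTensor H α.toLinearMap := rfl
  have hmapαβ : TensorProduct.map (α.comp β).toLinearMap LinearMap.id
      = LinearMap.rTensor H (α.toLinearMap ∘ₗ β.toLinearMap) := rfl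
  have hb : TensorProduct.map β.toLinearMap β.toLinearMap ∘ₗ comul (R := k) (A := H)
      = comul ∘ₗ β.toLinearMap := CoalgHomClass.map_comp_comul β
  have hF : TensorProduct.map β.toLinearMap LinearMap.id
      = (Algebra.TensorProduct.map (β : H →ₐ[k] H) (AlgHom.id k H)).toLinearMap := by
    apply TensorProduct.ext'; intro a c; rfl
  refine ⟨?_, ?_, ?_, ?_, ?_, ?_⟩
  · -- injectivity
    exact Function.LeftInverse.injective
      (g := fun y => (TensorProduct.lid k H) (LinearMap.rTensor H (counit (R := k) (A := H)) y))
      (twistedGalois_retract β)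
  · -- range = cotensor product
    rw [hcot]
    apply le_antisymm
    · rintro _ ⟨x, rfl⟩
      rw [LinearMap.mem_ker, LinearMap.sub_apply, sub_eq_zero, hmap]
      simpa only [comp_apply] using
        LinearMap.congr_fun (twistedGalois_ker β.toLinearMap hb) x
    · intro x hx
      rw [LinearMap.mem_ker, LinearMap.sub_apply, sub_eq_zero] at hx
      refine ⟨((TensorProduct.lid k H).toLinearMap ∘ₗ
        LinearMap.rTensor H (counit (R := k) (A := H))) x, ?_⟩
      have h1 : LinearMap.rTensor H ((TensorProduct.lid k H).toLinearMap ∘ₗ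
          LinearMap.rTensor H (counit (R := k) (A := H)))
            (LinearMap.rTensor H (comul (R := k) (A := H)) x) = x := by
        rw [← rTensor_comp_apply]
        have : ((TensorProduct.lid k H).toLinearMap ∘ₗ
            LinearMap.rTensor H (counit (R := k) (A := H))) ∘ₗ comul (R := k) (A := H)
            = LinearMap.id := by
          ext y
          simp [comp_apply, rTensor_counit_comul]
        rw [this, rTensor_id, id_coe, id_eq]
      have h2 := twistedGalois_counit_nat
        ((TensorProduct.map β.toLinearMap LinearMap.id) ∘ₗ comul (R := k) (A := H)) x
      rw [← h2]
      simp only [comp_apply, LinearEquiv.coe_coe] at hx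
      rw [← hx]
      exact h1
  · -- multiplicativity
    intro x y
    simp only [comp_apply, Bialgebra.comul_mul, hF, AlgHom.toLinearMap_apply, map_mul]
  · -- unitality
    simp only [comp_apply, Bialgebra.comul_one, hF, AlgHom.toLinearMap_apply, map_one]
  · -- left colinearity
    rw [hmap, hmapα, hmapαβ]
    exact twistedGalois_leftColinear α.toLinearMap β.toLinearMap hb
  · -- right colinearity
    rw [hmap]
    exact twistedGalois_rightColinear β.toLinearMap
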